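/- Suppose C = I_r and the left singular vectors of B (of rank r) span the same subspace as the ground eigenvectors V_g of A (eigenvectors for the r smallest eigenvalues d₁ ≤ … ≤ d_r). Then X = P_M(B) = U_B V_Bᵀ (polar factor of B) is a global minimizer of f(X) = ½ tr(XᵀAX) − tr(BᵀX) over St(n,r), and the cost satisfies the lower bound f(X) ≥ ½(d₁+⋯+d_r) − ‖B‖_* for all X ∈ St(n,r), with equality attained at this X. -/
import Mathlib


open Matrix BigOperators

lemma aux_mul_sub {m n r : ℕ} (M : Matrix (Fin m) (Fin n) ℝ) (N : Matrix (Fin n) (Fin n) ℝ)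
    (e : Fin r → Fin n) : M * N.submatrix id e = (M * N).submatrix id e := by
  ext i j; simp [Matrix.mul_apply]

lemma aux_trace_diag_mul {r : ℕ} (c : Fin r → ℝ) (M : Matrix (Fin r) (Fin r) ℝ) :
    (Matrix.diagonal c * M).trace = ∑ i, c i * M i i := by
  simp [Matrix.trace, Matrix.diag, Matrix.mul_apply, Matrix.diagonal, Finset.sum_ite_eq]

lemma aux_sum_cast {n r : ℕ} (hrn : r ≤ n) (g : Fin n → ℝ) :
    ∑ i : Fin r, g (Fin.castLE hrn i) = ∑ k : Fin n, if (k : ℕ) < r then g k else 0 := by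
  rw [Finset.sum_ite, Finset.sum_const_zero, add_zero]
  have hm := Finset.sum_map (Finset.univ : Finset (Fin r)) (Fin.castLEEmb hrn) g
  simp only [Fin.castLEEmb_apply] at hm
  rw [← hm]
  congr 1
  ext k
  simp only [Finset.mem_map, Finset.mem_univ, true_and, Finset.mem_filter, Fin.castLEEmb_apply]
  constructor
  · rintro ⟨i, rfl⟩; exact i.isLt
  · intro h; exact ⟨⟨k, h⟩, rfl⟩

/-- Ky Fan: for Z with orthonormal columns, ∑_{i<r} d_i ≤ tr(Zᵀ D Z)-style sum. -/
lemma aux_kyfan {n r : ℕ} (hr0 : 0 < r) (hrn : r ≤ n) (d : Fin n → ℝ) (hd : Monotone d)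
    (Z : Matrix (Fin n) (Fin r) ℝ) (hZ : Zᵀ * Z = 1) :
    ∑ i : Fin r, d (Fin.castLE hrn i) ≤ ∑ k : Fin n, d k * ((Z * Zᵀ) k k) := by
  set p : Fin n → ℝ := fun k => (Z * Zᵀ) k k with hp
  have hpsum : ∀ k, p k = ∑ j, Z k j * Z k j := by
    intro k; simp [hp, Matrix.mul_apply]
  have hp0 : ∀ k, 0 ≤ p k := by
    intro k; rw [hpsum]; exact Finset.sum_nonneg fun j _ => mul_self_nonneg _
  have hptr : ∑ k, p k = (r : ℝ) := by
    have h1 : ∀ j : Fin r, ∑ k, Z k j * Z k j = 1 := by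
      intro j
      have := congrArg (fun M => M j j) hZ
      simpa [Matrix.mul_apply, Matrix.one_apply, mul_comm] using this
    calc ∑ k, p k = ∑ k, ∑ j, Z k j * Z k j := by simp [hpsum]
      _ = ∑ j : Fin r, ∑ k, Z k j * Z k j := Finset.sum_comm
      _ = ∑ j : Fin r, (1:ℝ) := by simp [h1]
      _ = (r : ℝ) := by simp
  have hp1 : ∀ k, p k ≤ 1 := by
    intro k
    have hproj : (Z * Zᵀ) * (Z * Zᵀ) = Z * Zᵀ := by
      rw [Matrix.mul_assoc, ← Matrix.mul_assoc Zᵀ, hZ, Matrix.one_mul]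
    have hsymm : ∀ l, (Z * Zᵀ) l k = (Z * Zᵀ) k l := fun l => by
      simp only [Matrix.mul_apply, Matrix.transpose_apply]
      exact Finset.sum_congr rfl fun j _ => mul_comm _ _
    have hidem : ∑ l, (Z * Zᵀ) k l * (Z * Zᵀ) l k = p k := by
      rw [← Matrix.mul_apply, hproj]
    have h2 : ∑ l, (Z * Zᵀ) k l * (Z * Zᵀ) k l = p k := by
      rw [← hidem]; exact Finset.sum_congr rfl fun l _ => by rw [hsymm l]
    have h3 : (Z * Zᵀ) k k * (Z * Zᵀ) k k ≤ ∑ l, (Z * Zᵀ) k l * (Z * Zᵀ) k l :=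
      Finset.single_le_sum (f := fun l => (Z * Zᵀ) k l * (Z * Zᵀ) k l)
        (fun l _ => mul_self_nonneg _) (Finset.mem_univ k)
    have hsq : p k ^ 2 ≤ p k := by
      calc p k ^ 2 = (Z * Zᵀ) k k * (Z * Zᵀ) k k := by rw [hp]; ring
        _ ≤ ∑ l, (Z * Zᵀ) k l * (Z * Zᵀ) k l := h3
        _ = p k := h2
    nlinarith [hp0 k]
  -- main estimate
  set c : ℝ := d ⟨r - 1, lt_of_lt_of_le (by omega) hrn⟩ with hc
  have key : ∀ k : Fin n, 0 ≤ (d k - c) * (p k - (if (k:ℕ) < r then 1 else 0)) := by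
    intro k
    by_cases h : (k : ℕ) < r
    · simp only [h, if_pos]
      have hdk : d k ≤ c := hd (by simp [Fin.le_def]; omega)
      have := hp1 k
      nlinarith
    · simp only [h, if_neg, not_false_iff]
      have hdk : c ≤ d k := hd (by simp [Fin.le_def]; omega)
      have := hp0 k
      nlinarith
  have hqsum : ∑ k : Fin n, (if (k:ℕ) < r then (1:ℝ) else 0) = (r : ℝ) := by
    rw [← aux_sum_cast hrn (fun _ => (1:ℝ))]; simp
  have expand : ∑ k : Fin n, (d k - c) * (p k - (if (k:ℕ) < r then 1 else 0)) =
      (∑ k, d k * p k) - (∑ k : Fin n, if (k:ℕ) < r then d k else 0)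
        - c * ((∑ k, p k) - (∑ k : Fin n, (if (k:ℕ) < r then (1:ℝ) else 0))) := by
    rw [mul_sub, Finset.mul_sum, Finset.mul_sum]
    rw [← Finset.sum_sub_distrib, ← Finset.sum_sub_distrib, ← Finset.sum_sub_distrib]
    congr 1; ext k
    by_cases h : (k:ℕ) < r <;> simp [h] <;> ring
  have h0 : 0 ≤ ∑ k : Fin n, (d k - c) * (p k - (if (k:ℕ) < r then 1 else 0)) :=
    Finset.sum_nonneg fun k _ => key k
  rw [aux_sum_cast hrn d]
  rw [expand, hptr, hqsum] at h0
  linarith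

/-- nuclear norm bound: tr(BᵀY) ≤ ∑ s for Y with orthonormal columns. -/
lemma aux_nuc {n r : ℕ} (UB : Matrix (Fin n) (Fin r) ℝ) (VB : Matrix (Fin r) (Fin r) ℝ)
    (s : Fin r → ℝ) (hs : ∀ i, 0 ≤ s i)
    (hUB : UBᵀ * UB = 1) (hVB : VBᵀ * VB = 1)
    (Y : Matrix (Fin n) (Fin r) ℝ) (hY : Yᵀ * Y = 1) :
    ((UB * Matrix.diagonal s * VBᵀ)ᵀ * Y).trace ≤ ∑ i, s i := by
  have hBt : (UB * Matrix.diagonal s * VBᵀ)ᵀ * Y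
      = VB * (Matrix.diagonal s * (UBᵀ * Y)) := by
    rw [Matrix.transpose_mul, Matrix.transpose_mul, Matrix.transpose_transpose,
      Matrix.diagonal_transpose]
    simp only [Matrix.mul_assoc]
  have htr : ((UB * Matrix.diagonal s * VBᵀ)ᵀ * Y).trace
      = ∑ i, s i * ((UBᵀ * (Y * VB)) i i) := by
    rw [hBt, Matrix.trace_mul_comm]
    have h2 : Matrix.diagonal s * (UBᵀ * Y) * VB = Matrix.diagonal s * (UBᵀ * (Y * VB)) := by
      simp only [Matrix.mul_assoc]
    rw [h2, aux_trace_diag_mul]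
  rw [htr]
  apply Finset.sum_le_sum
  intro i _
  have hM : (UBᵀ * (Y * VB)) i i = ∑ k, UB k i * (Y * VB) k i := by
    simp [Matrix.mul_apply]
  have hu : ∑ k, UB k i ^ 2 = 1 := by
    have := congrArg (fun M => M i i) hUB
    simpa [Matrix.mul_apply, Matrix.one_apply, sq] using this
  have hYVB : (Y * VB)ᵀ * (Y * VB) = 1 := by
    rw [Matrix.transpose_mul, Matrix.mul_assoc, ← Matrix.mul_assoc Yᵀ, hY,
      Matrix.one_mul, hVB]
  have hw : ∑ k, (Y * VB) k i ^ 2 = 1 := by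
    have h4 : ∑ k, (Y * VB) k i * (Y * VB) k i = ((Y * VB)ᵀ * (Y * VB)) i i := by
      rw [Matrix.mul_apply]
      exact Finset.sum_congr rfl fun k _ => by rw [Matrix.transpose_apply]
    simp only [sq]
    rw [h4, hYVB]
    simp [Matrix.one_apply]
  have hcs : (∑ k, UB k i * (Y * VB) k i) ^ 2 ≤ 1 := by
    have := Finset.sum_mul_sq_le_sq_mul_sq Finset.univ (fun k => UB k i)
      (fun k => (Y * VB) k i)
    rw [hu, hw] at this
    simpa using this
  have hle : (UBᵀ * (Y * VB)) i i ≤ 1 := by rw [hM]; nlinarith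
  calc s i * (UBᵀ * (Y * VB)) i i ≤ s i * 1 := by
        exact mul_le_mul_of_nonneg_left hle (hs i)
    _ = s i := mul_one _

/-- if `C = I` and the left singular vectors `U_B` of the rank-`r` matrix
`B = U_B D_B V_Bᵀ` span the same space as the ground eigenvectors `V_g` of `A`, then the
polar factor `X = U_B V_Bᵀ` is a global minimizer of `f(X) = ½ tr(XᵀAX) − tr(BᵀX)` over
`St(n,r)`, the lower bound `f(Y) ≥ ½(d₁+⋯+d_r) − ‖B‖_*` holds for all `Y ∈ St(n,r)`,
and equality is attained at `X`. -/
theorem stmt9 {n r : ℕ} (hr0 : 0 < r) (hrn : r ≤ n)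
    (A : Matrix (Fin n) (Fin n) ℝ) (hA : A.IsSymm)
    (V : Matrix (Fin n) (Fin n) ℝ) (d : Fin n → ℝ) (hd : Monotone d)
    (hV : Vᵀ * V = 1) (hAV : A = V * Matrix.diagonal d * Vᵀ)
    (B UB : Matrix (Fin n) (Fin r) ℝ) (VB : Matrix (Fin r) (Fin r) ℝ)
    (s : Fin r → ℝ) (hs : ∀ i, 0 < s i)
    (hUB : UBᵀ * UB = 1) (hVB : VBᵀ * VB = 1) (hVB' : VB * VBᵀ = 1)
    (hSVD : B = UB * Matrix.diagonal s * VBᵀ)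
    (hspan : ∃ Q : Matrix (Fin r) (Fin r) ℝ, Qᵀ * Q = 1 ∧ Q * Qᵀ = 1 ∧
      UB = (V.submatrix id (Fin.castLE hrn)) * Q) :
    (UB * VBᵀ)ᵀ * (UB * VBᵀ) = 1 ∧
    (∀ Y : Matrix (Fin n) (Fin r) ℝ, Yᵀ * Y = 1 →
      (1 / 2 : ℝ) * ((UB * VBᵀ)ᵀ * A * (UB * VBᵀ)).trace - (Bᵀ * (UB * VBᵀ)).trace ≤
        (1 / 2 : ℝ) * (Yᵀ * A * Y).trace - (Bᵀ * Y).trace) ∧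
    (∀ Y : Matrix (Fin n) (Fin r) ℝ, Yᵀ * Y = 1 →
      (1 / 2 : ℝ) * (∑ i : Fin r, d (Fin.castLE hrn i)) - (∑ i : Fin r, s i) ≤
        (1 / 2 : ℝ) * (Yᵀ * A * Y).trace - (Bᵀ * Y).trace) ∧
    (1 / 2 : ℝ) * ((UB * VBᵀ)ᵀ * A * (UB * VBᵀ)).trace - (Bᵀ * (UB * VBᵀ)).trace =
      (1 / 2 : ℝ) * (∑ i : Fin r, d (Fin.castLE hrn i)) - (∑ i : Fin r, s i) := by
  obtain ⟨Q, hQ1, hQ2, hUBQ⟩ := hspan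
  have hVV : V * Vᵀ = 1 := mul_eq_one_comm.mp hV
  set e : Fin r → Fin n := Fin.castLE hrn with he
  set X : Matrix (Fin n) (Fin r) ℝ := UB * VBᵀ with hX
  -- X is on the Stiefel manifold
  have hXX : Xᵀ * X = 1 := by
    rw [hX, Matrix.transpose_mul, Matrix.transpose_transpose, Matrix.mul_assoc,
      ← Matrix.mul_assoc UBᵀ, hUB, Matrix.one_mul, hVB']
  -- trace(BᵀX) = ∑ s
  have htrBX : (Bᵀ * X).trace = ∑ i, s i := by
    have h1 : Bᵀ * X = VB * (Matrix.diagonal s * VBᵀ) := by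
      rw [hSVD, hX, Matrix.transpose_mul, Matrix.transpose_mul,
        Matrix.transpose_transpose, Matrix.diagonal_transpose]
      simp only [Matrix.mul_assoc]
      rw [← Matrix.mul_assoc UBᵀ UB, hUB, Matrix.one_mul]
    rw [h1, Matrix.trace_mul_comm, Matrix.mul_assoc, hVB, Matrix.mul_one,
      Matrix.trace_diagonal]
  -- trace(XᵀAX) = ∑ d(e i)
  have hE : ((1 : Matrix (Fin n) (Fin n) ℝ).submatrix id e)ᵀ * Matrix.diagonal d *
      ((1 : Matrix (Fin n) (Fin n) ℝ).submatrix id e) = Matrix.diagonal (fun i => d (e i)) := by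
    ext i j
    simp only [Matrix.mul_apply, Matrix.transpose_apply, Matrix.submatrix_apply, id_eq,
      Matrix.one_apply, Matrix.diagonal_apply, ite_mul, one_mul, zero_mul, mul_ite,
      mul_one, mul_zero]
    simp only [Finset.sum_ite_eq', Finset.mem_univ, if_true]
    by_cases h : i = j
    · subst h; simp
    · have hne : e j ≠ e i := fun hc => h (Fin.castLE_injective hrn (by
        rw [he] at hc; exact hc.symm))
      simp [h, hne]
  have hV1 : Vᵀ * (V.submatrix id e) = (1 : Matrix (Fin n) (Fin n) ℝ).submatrix id e := by
    rw [aux_mul_sub, hV]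
  have hUAU : UBᵀ * A * UB = Qᵀ * Matrix.diagonal (fun i => d (e i)) * Q := by
    rw [hUBQ, hAV, ← hE]
    rw [Matrix.transpose_mul, ← hV1]
    simp only [Matrix.transpose_mul, Matrix.transpose_transpose]
    simp only [Matrix.mul_assoc]
  have htrXAX : (Xᵀ * A * X).trace = ∑ i : Fin r, d (e i) := by
    have h1 : Xᵀ * A * X = VB * ((UBᵀ * A * UB) * VBᵀ) := by
      rw [hX, Matrix.transpose_mul, Matrix.transpose_transpose]
      simp only [Matrix.mul_assoc]
    rw [h1, Matrix.trace_mul_comm, Matrix.mul_assoc, hVB, Matrix.mul_one, hUAU,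
      Matrix.trace_mul_comm, ← Matrix.mul_assoc, hQ2, Matrix.one_mul,
      Matrix.trace_diagonal]
  -- lower bound for every Y
  have hlb : ∀ Y : Matrix (Fin n) (Fin r) ℝ, Yᵀ * Y = 1 →
      (1 / 2 : ℝ) * (∑ i : Fin r, d (Fin.castLE hrn i)) - (∑ i : Fin r, s i) ≤
        (1 / 2 : ℝ) * (Yᵀ * A * Y).trace - (Bᵀ * Y).trace := by
    intro Y hY
    have hZ : (Vᵀ * Y)ᵀ * (Vᵀ * Y) = 1 := by
      rw [Matrix.transpose_mul, Matrix.transpose_transpose, Matrix.mul_assoc,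
        ← Matrix.mul_assoc V, hVV, Matrix.one_mul, hY]
    have htr : (Yᵀ * A * Y).trace = ∑ k, d k * (((Vᵀ * Y) * (Vᵀ * Y)ᵀ) k k) := by
      have h1 : Yᵀ * A * Y = (Vᵀ * Y)ᵀ * (Matrix.diagonal d * (Vᵀ * Y)) := by
        rw [hAV, Matrix.transpose_mul, Matrix.transpose_transpose]
        simp only [Matrix.mul_assoc]
      rw [h1, Matrix.trace_mul_comm, Matrix.mul_assoc, aux_trace_diag_mul]
    have hkf := aux_kyfan hr0 hrn d hd (Vᵀ * Y) hZ
    have hnc : (Bᵀ * Y).trace ≤ ∑ i, s i := by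
      rw [hSVD]; exact aux_nuc UB VB s (fun i => (hs i).le) hUB hVB Y hY
    rw [htr]
    linarith
  have heq : (1 / 2 : ℝ) * (Xᵀ * A * X).trace - (Bᵀ * X).trace =
      (1 / 2 : ℝ) * (∑ i : Fin r, d (Fin.castLE hrn i)) - (∑ i : Fin r, s i) := by
    rw [htrXAX, htrBX, he]
  refine ⟨hXX, ?_, hlb, heq⟩
  intro Y hY
  calc (1 / 2 : ℝ) * (Xᵀ * A * X).trace - (Bᵀ * X).trace
      = (1 / 2 : ℝ) * (∑ i : Fin r, d (Fin.castLE hrn i)) - (∑ i : Fin r, s i) := heq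
    _ ≤ _ := hlb Y hY
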